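/- Let f_1, …, f_N : ℝ^d → ℝ each be convex and L-smooth, let f = (1/N)∑_{c=1}^N f_c have minimizer w*, and let u_1, …, u_N ∈ ℝ^d be arbitrary points. With ū = (1/N)∑_{c=1}^N u_c, ḡ = (1/N)∑_{c=1}^N ∇f_c(u_c), and V = (1/N)∑_{c=1}^N ‖u_c − ū‖², it holds that ‖ḡ‖² ≤ 2L²V + 4L(f(ū) − f(w*)). -/

import Mathlib

open scoped RealInnerProductSpace

lemma descent_aux {E : Type*} [NormedAddCommGroup E] [InnerProductSpace ℝ E]
    [CompleteSpace E]
    (f : E → ℝ) (g : E → E) (L : ℝ)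
    (hg : ∀ x, HasGradientAt f (g x) x)
    (hlip : ∀ x y, ‖g x - g y‖ ≤ L * ‖x - y‖) (x y : E) :
    f y ≤ f x + ⟪g x, y - x⟫ + L / 2 * ‖y - x‖ ^ 2 := by
  set v := y - x with hv
  set φ : ℝ → ℝ := fun t => f (x + t • v) - ⟪g x, v⟫ * t - L / 2 * ‖v‖ ^ 2 * t ^ 2 with hφ
  have hline : ∀ t : ℝ, HasDerivAt (fun s : ℝ => x + s • v) v t := by
    intro t
    simpa using ((hasDerivAt_id t).smul_const v).const_add x
  have hφ' : ∀ t : ℝ, HasDerivAt φ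
      (⟪g (x + t • v), v⟫ - ⟪g x, v⟫ - L / 2 * ‖v‖ ^ 2 * (2 * t)) t := by
    intro t
    have h1 : HasDerivAt (fun s : ℝ => f (x + s • v)) ⟪g (x + t • v), v⟫ t := by
      have := ((hg (x + t • v)).hasFDerivAt).comp_hasDerivAt t (hline t)
      simpa [Function.comp_def, InnerProductSpace.toDual_apply_apply] using this
    have h2 : HasDerivAt (fun s : ℝ => ⟪g x, v⟫ * s) ⟪g x, v⟫ t := by
      simpa using (hasDerivAt_id t).const_mul ⟪g x, v⟫
    have h3 : HasDerivAt (fun s : ℝ => L / 2 * ‖v‖ ^ 2 * s ^ 2)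
        (L / 2 * ‖v‖ ^ 2 * (2 * t)) t := by
      have := (hasDerivAt_pow 2 t).const_mul (L / 2 * ‖v‖ ^ 2)
      simpa [mul_comm, mul_assoc, mul_left_comm] using this
    exact (h1.sub h2).sub h3
  have hanti : AntitoneOn φ (Set.Icc (0:ℝ) 1) := by
    apply antitoneOn_of_deriv_nonpos (convex_Icc 0 1)
    · exact fun t _ => (hφ' t).continuousAt.continuousWithinAt
    · exact fun t _ => ((hφ' t).differentiableAt).differentiableWithinAt
    · intro t ht
      rw [interior_Icc] at ht
      rw [(hφ' t).deriv]
      have hinner : ⟪g (x + t • v), v⟫ - ⟪g x, v⟫ = ⟪g (x + t • v) - g x, v⟫ := by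
        rw [inner_sub_left]
      rw [hinner]
      have h1 : ⟪g (x + t • v) - g x, v⟫ ≤ ‖g (x + t • v) - g x‖ * ‖v‖ :=
        real_inner_le_norm _ _
      have h2 : ‖g (x + t • v) - g x‖ ≤ L * (t * ‖v‖) := by
        have := hlip (x + t • v) x
        simpa [norm_smul, abs_of_nonneg ht.1.le] using this
      nlinarith [norm_nonneg v, mul_le_mul_of_nonneg_right h2 (norm_nonneg v),
        ht.1.le, norm_nonneg (g (x + t • v) - g x)]
  have := hanti (Set.left_mem_Icc.2 zero_le_one) (Set.right_mem_Icc.2 zero_le_one) zero_le_one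
  simp only [hφ, one_smul, zero_smul, add_zero] at this
  have hxy : x + v = y := by rw [hv]; abel
  rw [hxy] at this
  nlinarith [this]

lemma grad_sq_le_gap {E : Type*} [NormedAddCommGroup E] [InnerProductSpace ℝ E]
    [CompleteSpace E]
    (f : E → ℝ) (g : E → E) (L : ℝ) (hL : 0 < L)
    (hg : ∀ x, HasGradientAt f (g x) x)
    (hlip : ∀ x y, ‖g x - g y‖ ≤ L * ‖x - y‖)
    (wstar : E) (hmin : ∀ x, f wstar ≤ f x) (x : E) :
    ‖g x‖ ^ 2 ≤ 2 * L * (f x - f wstar) := by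
  have h := descent_aux f g L hg hlip x (x - L⁻¹ • g x)
  have h1 : x - L⁻¹ • g x - x = -(L⁻¹ • g x) := by abel
  rw [h1] at h
  have h2 : ⟪g x, -(L⁻¹ • g x)⟫ = -(L⁻¹ * ‖g x‖ ^ 2) := by
    rw [inner_neg_right, real_inner_smul_right, real_inner_self_eq_norm_sq]
  have h3 : ‖-(L⁻¹ • g x)‖ ^ 2 = L⁻¹ ^ 2 * ‖g x‖ ^ 2 := by
    rw [norm_neg, norm_smul, mul_pow]
    simp [abs_of_pos (inv_pos.2 hL)]
  rw [h2, h3] at h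
  have hm := hmin (x - L⁻¹ • g x)
  have e : -(L⁻¹ * ‖g x‖ ^ 2) + L / 2 * (L⁻¹ ^ 2 * ‖g x‖ ^ 2)
      = -(‖g x‖ ^ 2 / (2 * L)) := by
    field_simp
    ring
  have h' : ‖g x‖ ^ 2 / (2 * L) ≤ f x - f wstar := by linarith
  have := (div_le_iff₀ (by positivity : (0:ℝ) < 2 * L)).1 h'
  linarith

theorem avg_gradient_norm_bound
    {E : Type*} [NormedAddCommGroup E] [InnerProductSpace ℝ E]
    [FiniteDimensional ℝ E]
    {N : ℕ} (hN : 0 < N) (f : Fin N → E → ℝ) (L : ℝ) (hL : 0 < L)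
    (hdiff : ∀ c, Differentiable ℝ (f c))
    (hsmooth : ∀ c (x y : E), ‖gradient (f c) x - gradient (f c) y‖ ≤ L * ‖x - y‖)
    (hconv : ∀ c (x y : E), f c y ≥ f c x + ⟪gradient (f c) x, y - x⟫)
    (wstar : E)
    (hmin : ∀ x, (N : ℝ)⁻¹ * ∑ c, f c wstar ≤ (N : ℝ)⁻¹ * ∑ c, f c x)
    (u : Fin N → E) :
    ‖(N : ℝ)⁻¹ • ∑ c, gradient (f c) (u c)‖ ^ 2
      ≤ 2 * L ^ 2 * ((N : ℝ)⁻¹ * ∑ c, ‖u c - (N : ℝ)⁻¹ • ∑ c', u c'‖ ^ 2)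
        + 4 * L * ((N : ℝ)⁻¹ * ∑ c, f c ((N : ℝ)⁻¹ • ∑ c', u c')
            - (N : ℝ)⁻¹ * ∑ c, f c wstar) := by
  have hNR : (0:ℝ) < (N:ℝ) := by exact_mod_cast hN
  have hNne : (N:ℝ) ≠ 0 := ne_of_gt hNR
  set ub : E := (N : ℝ)⁻¹ • ∑ c', u c' with hub
  set F : E → ℝ := fun x => (N : ℝ)⁻¹ * ∑ c, f c x with hF
  set G : E → E := fun x => (N : ℝ)⁻¹ • ∑ c, gradient (f c) x with hG
  -- F has gradient G
  have hgradF : ∀ x, HasGradientAt F (G x) x := by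
    intro x
    have hfd : HasFDerivAt F ((N:ℝ)⁻¹ • ∑ c, fderiv ℝ (f c) x) x := by
      have hsum : HasFDerivAt (fun y => ∑ c, f c y) (∑ c, fderiv ℝ (f c) x) x :=
        HasFDerivAt.fun_sum fun c _ => (hdiff c x).hasFDerivAt
      simpa [hF, Pi.smul_def, smul_eq_mul] using hsum.const_smul (N:ℝ)⁻¹
    have := hasFDerivAt_iff_hasGradientAt.1 hfd
    convert this using 1
    simp [hG, gradient, map_smul, map_sum]
  -- G is L-Lipschitz
  have hlipG : ∀ x y, ‖G x - G y‖ ≤ L * ‖x - y‖ := by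
    intro x y
    have : G x - G y = (N:ℝ)⁻¹ • ∑ c, (gradient (f c) x - gradient (f c) y) := by
      simp [hG, Finset.sum_sub_distrib, smul_sub]
    rw [this, norm_smul]
    have h1 : ‖∑ c, (gradient (f c) x - gradient (f c) y)‖ ≤ ∑ c : Fin N, L * ‖x - y‖ :=
      (norm_sum_le _ _).trans (Finset.sum_le_sum fun c _ => hsmooth c x y)
    have h2 : ∑ c : Fin N, L * ‖x - y‖ = (N:ℝ) * (L * ‖x - y‖) := by
      simp [Finset.sum_const, mul_comm]
    calc ‖(N:ℝ)⁻¹‖ * ‖∑ c, (gradient (f c) x - gradient (f c) y)‖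
        ≤ ‖(N:ℝ)⁻¹‖ * ((N:ℝ) * (L * ‖x - y‖)) := by
          apply mul_le_mul_of_nonneg_left _ (norm_nonneg _)
          rw [← h2]; exact h1
      _ = L * ‖x - y‖ := by
          rw [Real.norm_eq_abs, abs_of_pos (inv_pos.2 hNR)]
          field_simp
  -- gradient bound at ub
  have hgap : ‖G ub‖ ^ 2 ≤ 2 * L * (F ub - F wstar) :=
    grad_sq_le_gap F G L hL hgradF hlipG wstar hmin ub
  -- variance bound
  set gb : E := (N : ℝ)⁻¹ • ∑ c, gradient (f c) (u c) with hgb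
  have hvar : ‖gb - G ub‖ ^ 2 ≤ L ^ 2 * ((N:ℝ)⁻¹ * ∑ c, ‖u c - ub‖ ^ 2) := by
    have hdiffsum : gb - G ub
        = (N:ℝ)⁻¹ • ∑ c, (gradient (f c) (u c) - gradient (f c) ub) := by
      simp [hgb, hG, Finset.sum_sub_distrib, smul_sub]
    have hnorm : ‖gb - G ub‖ ≤ (N:ℝ)⁻¹ * ∑ c, L * ‖u c - ub‖ := by
      rw [hdiffsum, norm_smul, Real.norm_eq_abs, abs_of_pos (inv_pos.2 hNR)]
      exact mul_le_mul_of_nonneg_left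
        ((norm_sum_le _ _).trans (Finset.sum_le_sum fun c _ => hsmooth c (u c) ub))
        (inv_pos.2 hNR).le
    have hcs : (∑ c, ‖u c - ub‖) ^ 2 ≤ (N:ℝ) * ∑ c, ‖u c - ub‖ ^ 2 := by
      have := sq_sum_le_card_mul_sum_sq (s := (Finset.univ : Finset (Fin N)))
        (f := fun c => ‖u c - ub‖)
      simpa using this
    have hnn : (0:ℝ) ≤ ‖gb - G ub‖ := norm_nonneg _
    have hrhsnn : (0:ℝ) ≤ (N:ℝ)⁻¹ * ∑ c, L * ‖u c - ub‖ := le_trans hnn hnorm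
    have hsq := mul_self_le_mul_self hnn hnorm
    have hmulL : ∑ c, L * ‖u c - ub‖ = L * ∑ c, ‖u c - ub‖ := by
      rw [Finset.mul_sum]
    calc ‖gb - G ub‖ ^ 2 = ‖gb - G ub‖ * ‖gb - G ub‖ := sq ‖gb - G ub‖
      _ ≤ ((N:ℝ)⁻¹ * ∑ c, L * ‖u c - ub‖) * ((N:ℝ)⁻¹ * ∑ c, L * ‖u c - ub‖) := hsq
      _ = L ^ 2 * ((N:ℝ)⁻¹ * (N:ℝ)⁻¹ * (∑ c, ‖u c - ub‖) ^ 2) := by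
          rw [hmulL]; ring
      _ ≤ L ^ 2 * ((N:ℝ)⁻¹ * (N:ℝ)⁻¹ * ((N:ℝ) * ∑ c, ‖u c - ub‖ ^ 2)) := by
          apply mul_le_mul_of_nonneg_left _ (sq_nonneg L)
          apply mul_le_mul_of_nonneg_left hcs
          positivity
      _ = L ^ 2 * ((N:ℝ)⁻¹ * ∑ c, ‖u c - ub‖ ^ 2) := by
          field_simp
  -- combine
  have hsplit : ‖gb‖ ^ 2 ≤ 2 * ‖gb - G ub‖ ^ 2 + 2 * ‖G ub‖ ^ 2 := by
    have h1 : ‖gb‖ ≤ ‖gb - G ub‖ + ‖G ub‖ := by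
      simpa using norm_add_le (gb - G ub) (G ub)
    nlinarith [norm_nonneg gb, norm_nonneg (gb - G ub), norm_nonneg (G ub),
      sq_nonneg (‖gb - G ub‖ - ‖G ub‖)]
  calc ‖gb‖ ^ 2 ≤ 2 * ‖gb - G ub‖ ^ 2 + 2 * ‖G ub‖ ^ 2 := hsplit
    _ ≤ 2 * (L ^ 2 * ((N:ℝ)⁻¹ * ∑ c, ‖u c - ub‖ ^ 2)) + 2 * (2 * L * (F ub - F wstar)) := by
        gcongr
    _ = 2 * L ^ 2 * ((N:ℝ)⁻¹ * ∑ c, ‖u c - ub‖ ^ 2) + 4 * L * (F ub - F wstar) := by ring
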